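/- Suppose N_n = (1/9)(d1·10^{m1+m2} − (d1−d2)·10^{m2} − d2) with 1 ≤ d1 ≤ 9, 0 ≤ d2 ≤ 9, m1, m2 ≥ 1 and n ≥ 1. Then (m1+m2)·log 10 − 2 < n·log α < (m1+m2)·log 10 + 1, where α is the real root of x³ − x² − 1. -/
import Mathlib


def narayana : ℕ → ℕ
  | 0 => 0
  | 1 => 1
  | 2 => 1
  | n + 3 => narayana (n + 2) + narayana n

lemma narayana_rec (j : ℕ) : narayana (j+5) = narayana (j+4) + narayana (j+2) := rfl

/-- Upper bound: `N (k+2) ≤ α ^ k`. -/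
lemma narayana_le (α : ℝ) (hα : α ^ 3 = α ^ 2 + 1) (h1 : 1.46 < α) :
    ∀ k, (narayana (k+2) : ℝ) ≤ α ^ k := by
  intro k
  induction k using Nat.strong_induction_on with
  | _ k ih =>
    match k with
    | 0 => simp [narayana]
    | 1 => show (narayana 3 : ℝ) ≤ α ^ 1; simp [narayana]; nlinarith
    | 2 => show (narayana 4 : ℝ) ≤ α ^ 2; norm_num [narayana]; nlinarith
    | (j+3) =>
      have h₁ := ih (j+2) (by omega)
      have h₂ := ih j (by omega)
      have e1 : (narayana (j+5) : ℝ) = narayana (j+4) + narayana (j+2) := by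
        rw [narayana_rec]; push_cast; ring
      show (narayana (j+5) : ℝ) ≤ α ^ (j+3)
      rw [e1]
      have hp : (0:ℝ) ≤ α ^ j := by positivity
      have e2 : α ^ (j+3) = α ^ j * α ^ 3 := by ring
      rw [e2, hα]
      have e3 : α ^ (j+2) = α ^ j * α ^ 2 := by ring
      nlinarith

/-- Lower bound: `0.86 * α ^ (k+2) ≤ N (k+4)`. -/
lemma narayana_ge (α : ℝ) (hα : α ^ 3 = α ^ 2 + 1) (h1 : 1.46 < α) (h2 : α < 1.466) :
    ∀ k, 0.86 * α ^ (k+2) ≤ (narayana (k+4) : ℝ) := by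
  intro k
  induction k using Nat.strong_induction_on with
  | _ k ih =>
    match k with
    | 0 => show 0.86 * α ^ 2 ≤ (narayana 4 : ℝ); norm_num [narayana]; nlinarith
    | 1 => show 0.86 * α ^ 3 ≤ (narayana 5 : ℝ); norm_num [narayana]; nlinarith
    | 2 =>
      show 0.86 * α ^ 4 ≤ (narayana 6 : ℝ)
      norm_num [narayana]
      have e0 : α ^ 4 = α * α ^ 3 := by ring
      nlinarith
    | (j+3) =>
      have h₁ := ih (j+2) (by omega)
      have h₂ := ih j (by omega)
      have e1 : (narayana (j+7) : ℝ) = narayana (j+6) + narayana (j+4) := by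
        rw [show j+7 = (j+2)+5 from rfl, narayana_rec]; push_cast; ring
      show 0.86 * α ^ (j+5) ≤ (narayana (j+7) : ℝ)
      rw [e1]
      have hp : (0:ℝ) ≤ α ^ j := by positivity
      have e2 : α ^ (j+5) = α ^ (j+2) * α ^ 3 := by ring
      have e3 : α ^ (j+4) = α ^ (j+2) * α ^ 2 := by ring
      nlinarith

set_option maxHeartbeats 1000000 in
/-- If `N n` is a concatenation of two repdigits then
`(m1+m2)log 10 - 2 < n log α < (m1+m2)log 10 + 1`. -/
theorem narayana_size_relation (α : ℝ) (hα : α ^ 3 = α ^ 2 + 1)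
    (n d1 d2 m1 m2 : ℕ) (hn : 1 ≤ n)
    (hd1 : 1 ≤ d1) (hd1' : d1 ≤ 9) (hd2 : d2 ≤ 9) (hm1 : 1 ≤ m1) (hm2 : 1 ≤ m2)
    (heq : 9 * (narayana n : ℝ) =
      (d1 : ℝ) * 10 ^ (m1 + m2) - ((d1 : ℝ) - (d2 : ℝ)) * 10 ^ m2 - (d2 : ℝ)) :
    ((m1 + m2 : ℕ) : ℝ) * Real.log 10 - 2 < (n : ℝ) * Real.log α ∧
    (n : ℝ) * Real.log α < ((m1 + m2 : ℕ) : ℝ) * Real.log 10 + 1 := by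
  have h1 : 1.46 < α := by
    nlinarith [sq_nonneg (α - 1.46), sq_nonneg (α + 1), sq_nonneg α, sq_nonneg (α - 1)]
  have h2 : α < 1.466 := by
    nlinarith [sq_nonneg (α - 1.466), sq_nonneg (α + 1), sq_nonneg α, sq_nonneg (α - 1)]
  -- bounds coming from the digit representation
  have hX : (10:ℝ) ≤ 10 ^ m1 := by
    calc (10:ℝ) = 10 ^ 1 := by norm_num
    _ ≤ 10 ^ m1 := by apply pow_le_pow_right₀ (by norm_num) hm1
  have hY : (10:ℝ) ≤ 10 ^ m2 := by
    calc (10:ℝ) = 10 ^ 1 := by norm_num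
    _ ≤ 10 ^ m2 := by apply pow_le_pow_right₀ (by norm_num) hm2
  have hd1R : (1:ℝ) ≤ d1 := by exact_mod_cast hd1
  have hd1R' : (d1:ℝ) ≤ 9 := by exact_mod_cast hd1'
  have hd2R : (0:ℝ) ≤ d2 := by positivity
  have hd2R' : (d2:ℝ) ≤ 9 := by exact_mod_cast hd2
  rw [pow_add] at heq
  have hN10 : (10:ℝ) ≤ (narayana n : ℝ) := by
    nlinarith [mul_nonneg (sub_nonneg.2 hd1R) (sub_nonneg.2 hY),
      mul_le_mul_of_nonneg_left hX (le_trans zero_le_one hd1R),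
      mul_nonneg hd2R (by linarith : (0:ℝ) ≤ 10 ^ m2 - 1)]
  have hup : (narayana n : ℝ) ≤ 10 ^ m1 * 10 ^ m2 := by
    nlinarith [mul_nonneg (mul_nonneg (sub_nonneg.2 hd1R')
        (by linarith : (0:ℝ) ≤ 10 ^ m1 - 1)) (by linarith : (0:ℝ) ≤ (10:ℝ) ^ m2),
      mul_nonneg (sub_nonneg.2 hd2R') (by linarith : (0:ℝ) ≤ 10 ^ m2 - 1)]
  have hlow : (10:ℝ) ^ m1 * 10 ^ m2 ≤ 10 * (narayana n : ℝ) := by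
    nlinarith [mul_nonneg (mul_nonneg (sub_nonneg.2 hd1R)
        (by linarith : (0:ℝ) ≤ 10 ^ m1 - 10)) (by linarith : (0:ℝ) ≤ (10:ℝ) ^ m2),
      mul_nonneg hd2R (by linarith : (0:ℝ) ≤ 10 ^ m2 - 1),
      mul_nonneg (sub_nonneg.2 hd1R) (by linarith : (0:ℝ) ≤ (10:ℝ) ^ m2)]
  -- `n ≥ 4`
  have hNnat : 10 ≤ narayana n := by exact_mod_cast hN10
  have hn4 : 4 ≤ n := by
    by_contra h
    interval_cases n <;> simp [narayana] at hNnat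
  obtain ⟨k, rfl⟩ : ∃ k, n = k + 4 := ⟨n - 4, by omega⟩
  have hA : (narayana (k+4) : ℝ) ≤ α ^ (k+2) := narayana_le α hα h1 (k+2)
  have hB : 0.86 * α ^ (k+2) ≤ (narayana (k+4) : ℝ) := narayana_ge α hα h1 h2 k
  obtain ⟨N, hA, hB, hup2, hlow2, hN10'⟩ : ∃ N : ℝ, N ≤ α ^ (k+2) ∧
      0.86 * α ^ (k+2) ≤ N ∧ N ≤ 10 ^ m1 * 10 ^ m2 ∧
      (10:ℝ) ^ m1 * 10 ^ m2 ≤ 10 * N ∧ (10:ℝ) ≤ N :=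
    ⟨(narayana (k+4) : ℝ), hA, hB, hup, hlow, hN10⟩
  clear hup hlow
  rw [← pow_add] at hup2 hlow2
  clear hα heq hX hY hd1R hd1R' hd2R hd2R' hNnat hN10 hn hn4 hd1 hd1' hd2 hm1 hm2
  -- numeric setup
  have hαpos : (0:ℝ) < α := by linarith
  have hp2 : (0:ℝ) < α ^ (k+2) := by positivity
  have hpn : (0:ℝ) < α ^ (k+4) := by positivity
  have h10pos : (0:ℝ) < (10:ℝ) ^ (m1+m2) := by positivity
  have he := Real.exp_one_gt_d9
  have hepos : (0:ℝ) < Real.exp 1 := Real.exp_pos 1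
  have hsplit : α ^ (k+4) = α ^ (k+2) * α ^ 2 := by ring
  have ha2u : α ^ 2 < 2.1492 := by nlinarith
  have ha2l : (2.13:ℝ) < α ^ 2 := by nlinarith
  -- upper: α^(k+4) < e * 10^(m1+m2)
  have hub : α ^ (k+4) < Real.exp 1 * 10 ^ (m1+m2) := by
    have f1 : 0.86 * α ^ (k+4) ≤ N * α ^ 2 := by
      rw [hsplit]; nlinarith [mul_le_mul_of_nonneg_right hB (by positivity : (0:ℝ) ≤ α ^ 2)]
    have f2 : N * α ^ 2 ≤ 10 ^ (m1+m2) * 2.1492 := by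
      have hN : (0:ℝ) < N := by nlinarith
      nlinarith [mul_le_mul_of_nonneg_right hup2 (by positivity : (0:ℝ) ≤ α ^ 2)]
    have f3 : (2.7182818283:ℝ) * 10 ^ (m1+m2) ≤ Real.exp 1 * 10 ^ (m1+m2) :=
      mul_le_mul_of_nonneg_right (le_of_lt he) (le_of_lt h10pos)
    linarith
  -- lower: 10^(m1+m2) < e^2 * α^(k+4)
  have hlb : (10:ℝ) ^ (m1+m2) < Real.exp 1 ^ 2 * α ^ (k+4) := by
    have g1 : (10:ℝ) ^ (m1+m2) ≤ 10 * α ^ (k+2) := by linarith [hlow2, hA]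
    have g2 : 2.13 * α ^ (k+2) ≤ α ^ (k+4) := by
      rw [hsplit]; nlinarith [mul_le_mul_of_nonneg_left (le_of_lt ha2l) (le_of_lt hp2)]
    have g3 : (7.389:ℝ) < Real.exp 1 ^ 2 := by nlinarith
    have g4 : (7.389:ℝ) * α ^ (k+4) ≤ Real.exp 1 ^ 2 * α ^ (k+4) :=
      mul_le_mul_of_nonneg_right (le_of_lt g3) (le_of_lt hpn)
    nlinarith
  constructor
  · have hl := Real.log_lt_log h10pos hlb
    rw [Real.log_mul (by positivity) (ne_of_gt hpn), Real.log_pow, Real.log_pow,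
      Real.log_pow, Real.log_exp] at hl
    push_cast at hl ⊢
    linarith
  · have hl := Real.log_lt_log hpn hub
    rw [Real.log_mul (Real.exp_ne_zero 1) (by positivity), Real.log_exp,
      Real.log_pow, Real.log_pow] at hl
    push_cast at hl ⊢
    linarith
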